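/- Let n ≥ 1 and let B be a finite list of bids on n goods. Then the indirect utility function f_B is convex on ℝ^n if and only if there is no price vector p ∈ ℝ^n and pair of distinct goods i, i' ∈ {0,1,…,n} at which the weights of the bids of B that are marginal on both i and i' at p sum to a negative number; that is, f_B is convex if and only if for every p ∈ ℝ^n and all distinct i, i' ∈ {0,1,…,n}, the sum ∑{ w : (b,w) ∈ B, (b,w) demands both i and i' at p } is non-negative. -/

import Mathlib

open Finset

noncomputable section

variable {n : ℕ}

/-- Extend a value/price vector in `ℝ^n` by a 0-th coordinate (the reject good) equal to 0. -/
def extVec (b : Fin n → ℝ) : Fin (n + 1) → ℝ := Fin.cons 0 b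

/-- Surplus of good `i` (in `{0,…,n}`) for value vector `b` at price `p`. -/
def surplus (b p : Fin n → ℝ) (i : Fin (n + 1)) : ℝ := extVec b i - extVec p i

/-- Maximal surplus over all goods (including the reject good). -/
def maxSurplus (b p : Fin n → ℝ) : ℝ :=
  Finset.univ.sup' Finset.univ_nonempty (surplus b p)

/-- The bid with value vector `b` demands good `i` at price `p`. -/
def Demands (b p : Fin n → ℝ) (i : Fin (n + 1)) : Prop :=
  ∀ j, surplus b p j ≤ surplus b p i

open Classical in
/-- The set of goods demanded by value vector `b` at price `p`. -/
def demandedSet (b p : Fin n → ℝ) : Finset (Fin (n + 1)) :=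
  Finset.univ.filter fun i => Demands b p i

/-- Indirect utility function of a bid list (bids are pairs of value vector and weight). -/
def indirectUtility (B : List ((Fin n → ℝ) × ℝ)) (p : Fin n → ℝ) : ℝ :=
  (B.map fun bw => bw.2 * maxSurplus bw.1 p).sum

/-- Surplus gap of the bid `b` at `p`: maximal surplus minus the best surplus on
a non-demanded good (junk value when every good is demanded). -/
def surplusGap (b p : Fin n → ℝ) : ℝ :=
  maxSurplus b p - sSup (surplus b p '' {i | i ∉ demandedSet b p})

/-- `B` is `ε`-valid at `p` if its indirect utility function is convex on the open
`L∞`-ball of radius `ε` around `p`. -/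
def epsValid (B : List ((Fin n → ℝ) × ℝ)) (p : Fin n → ℝ) (ε : ℝ) : Prop :=
  ConvexOn ℝ {q : Fin n → ℝ | ‖q - p‖ < ε} (indirectUtility B)

open Classical in
/-- Sum of the weights of bids in `B` that are marginal on both `i` and `i'` at `p`. -/
def marginalWeight (B : List ((Fin n → ℝ) × ℝ)) (p : Fin n → ℝ) (i i' : Fin (n + 1)) : ℝ :=
  (B.map fun bw => if Demands bw.1 p i ∧ Demands bw.1 p i' then bw.2 else 0).sum


-- ## basics

lemma mem_demandedSet {b p : Fin n → ℝ} {i : Fin (n+1)} :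
    i ∈ demandedSet b p ↔ Demands b p i := by
  classical
  simp [demandedSet]

lemma demandedSet_nonempty (b p : Fin n → ℝ) : (demandedSet b p).Nonempty := by
  obtain ⟨i, -, hi⟩ := Finset.exists_mem_eq_sup' (Finset.univ_nonempty (α := Fin (n+1)))
    (surplus b p)
  exact ⟨i, mem_demandedSet.2 fun j => hi ▸ Finset.le_sup' _ (Finset.mem_univ j)⟩

lemma surplus_le_maxSurplus (b p : Fin n → ℝ) (j : Fin (n+1)) :
    surplus b p j ≤ maxSurplus b p :=
  Finset.le_sup' _ (Finset.mem_univ j)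

lemma Demands.surplus_eq {b p : Fin n → ℝ} {i : Fin (n+1)} (h : Demands b p i) :
    surplus b p i = maxSurplus b p :=
  le_antisymm (surplus_le_maxSurplus b p i) (Finset.sup'_le _ _ fun j _ => h j)

lemma demands_iff_eq_max {b p : Fin n → ℝ} {i : Fin (n+1)} :
    Demands b p i ↔ surplus b p i = maxSurplus b p := by
  constructor
  · exact Demands.surplus_eq
  · intro h j
    rw [h]; exact surplus_le_maxSurplus b p j

lemma extVec_add_smul (q v : Fin n → ℝ) (ε : ℝ) (i : Fin (n+1)) :
    extVec (q + ε • v) i = extVec q i + ε * extVec v i := by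
  induction i using Fin.cases with
  | zero => simp [extVec]
  | succ j => simp [extVec]

lemma surplus_add_smul (b q v : Fin n → ℝ) (ε : ℝ) (i : Fin (n+1)) :
    surplus b (q + ε • v) i = surplus b q i - ε * extVec v i := by
  simp [surplus, extVec_add_smul]; ring

def dminV (b q : Fin n → ℝ) (u : Fin (n+1) → ℝ) : ℝ :=
  (demandedSet b q).inf' (demandedSet_nonempty b q) u

def dmaxV (b q : Fin n → ℝ) (u : Fin (n+1) → ℝ) : ℝ :=
  (demandedSet b q).sup' (demandedSet_nonempty b q) u

lemma dminV_neg (b q : Fin n → ℝ) (u : Fin (n+1) → ℝ) :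
    dminV b q (fun i => - u i) = - dmaxV b q u := by
  apply le_antisymm
  · obtain ⟨i, hi, hival⟩ := Finset.exists_mem_eq_inf' (demandedSet_nonempty b q)
      (fun i => - u i)
    rw [dminV, hival, neg_le_neg_iff]
    apply Finset.sup'_le
    intro j hj
    have h2 := Finset.inf'_le (fun i => - u i) hj
    rw [hival] at h2
    simpa using h2
  · apply Finset.le_inf'
    intro i hi
    have := Finset.le_sup' u hi
    simp only [dmaxV]
    linarith

-- ## single-bid perturbation lemma

lemma pert_single (b q : Fin n → ℝ) (v : Fin n → ℝ) :
    ∃ ε₀ > 0, ∀ ε : ℝ, 0 < ε → ε ≤ ε₀ →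
      maxSurplus b (q + ε • v) = maxSurplus b q - ε * dminV b q (extVec v) ∧
      ∀ i, (i ∈ demandedSet b (q + ε • v) ↔
        i ∈ demandedSet b q ∧ extVec v i = dminV b q (extVec v)) := by
  classical
  set S := demandedSet b q with hS
  set g := maxSurplus b q with hg
  set m := dminV b q (extVec v) with hm
  set Mv : ℝ := Finset.univ.sup' Finset.univ_nonempty (fun i => |extVec v i|) with hMv
  have habs : ∀ i, |extVec v i| ≤ Mv :=
    fun i => Finset.le_sup' (fun i => |extVec v i|) (Finset.mem_univ i)
  have hMv0 : 0 ≤ Mv := le_trans (abs_nonneg _) (habs 0)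
  have hmabs : -Mv ≤ m := by
    apply Finset.le_inf'
    intro i _
    exact neg_le_of_abs_le (habs i)
  set Sc : Finset (Fin (n+1)) := Finset.univ.filter (fun j => j ∉ S) with hSc
  set gap : ℝ := if h : Sc.Nonempty then g - Sc.sup' h (surplus b q) else 1 with hgap
  have hgappos : 0 < gap := by
    rw [hgap]
    split
    · rename_i h
      obtain ⟨j, hj, hjval⟩ := Finset.exists_mem_eq_sup' h (surplus b q)
      have hjS : j ∉ S := (Finset.mem_filter.1 hj).2
      have : ¬ Demands b q j := fun hd => hjS (mem_demandedSet.2 hd)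
      have hlt : surplus b q j < g := by
        rcases lt_or_eq_of_le (surplus_le_maxSurplus b q j) with h' | h'
        · exact h'
        · exact absurd (demands_iff_eq_max.2 h') this
      rw [hjval]
      linarith
    · norm_num
  refine ⟨gap / (2 * Mv + 1), by positivity, ?_⟩
  intro ε hε hεle
  -- key inequalities
  have hmabs2 : m ≤ Mv := by
    obtain ⟨i, hi, hival⟩ := Finset.exists_mem_eq_inf' (demandedSet_nonempty b q) (extVec v)
    have h1 : m ≤ extVec v i := Finset.inf'_le _ hi
    exact h1.trans ((le_abs_self _).trans (habs i))
  have hbound : ε * Mv + ε * Mv < gap := by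
    have h2 : (0:ℝ) < 2 * Mv + 1 := by positivity
    have h1 : ε * (2 * Mv + 1) ≤ gap := by
      calc ε * (2*Mv+1) ≤ (gap / (2*Mv+1)) * (2*Mv+1) :=
            mul_le_mul_of_nonneg_right hεle (le_of_lt h2)
        _ = gap := div_mul_cancel₀ _ (ne_of_gt h2)
    nlinarith
  have hinS : ∀ i ∈ S, surplus b (q + ε • v) i = g - ε * extVec v i := by
    intro i hi
    rw [surplus_add_smul, (mem_demandedSet.1 hi).surplus_eq]
  have hnotS : ∀ j, j ∉ S → surplus b (q + ε • v) j < g - ε * m := by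
    intro j hj
    have hjSc : j ∈ Sc := Finset.mem_filter.2 ⟨Finset.mem_univ j, hj⟩
    have hScne : Sc.Nonempty := ⟨j, hjSc⟩
    have hgap' : gap = g - Sc.sup' hScne (surplus b q) := by
      rw [hgap, dif_pos hScne]
    have hjle : surplus b q j ≤ g - gap := by
      rw [hgap']
      have := Finset.le_sup' (surplus b q) hjSc
      linarith
    rw [surplus_add_smul]
    have h1 : - (ε * extVec v j) ≤ ε * Mv := by
      have := neg_le_of_abs_le (habs j)
      nlinarith
    have h3 : ε * m ≤ ε * Mv := by nlinarith
    linarith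
  have hmax : maxSurplus b (q + ε • v) = g - ε * m := by
    apply le_antisymm
    · apply Finset.sup'_le
      intro j _
      by_cases hj : j ∈ S
      · rw [hinS j hj]
        have : m ≤ extVec v j := Finset.inf'_le _ hj
        nlinarith
      · exact le_of_lt (hnotS j hj)
    · obtain ⟨i, hi, hival⟩ := Finset.exists_mem_eq_inf' (demandedSet_nonempty b q) (extVec v)
      have h5 := hinS i hi
      have hival' : m = extVec v i := hival
      rw [hival', ← h5]
      exact surplus_le_maxSurplus _ _ _
  refine ⟨hmax, ?_⟩
  intro i
  rw [mem_demandedSet, demands_iff_eq_max, hmax]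
  constructor
  · intro h
    by_cases hi : i ∈ S
    · refine ⟨hi, ?_⟩
      rw [hinS i hi] at h
      have : ε * extVec v i = ε * m := by linarith
      exact mul_left_cancel₀ (ne_of_gt hε) this
    · exact absurd h (ne_of_lt (hnotS i hi))
  · rintro ⟨hi, hval⟩
    rw [hinS i hi, hval]


-- ## list helpers

lemma list_sum_split {α : Type*} (B : List α) (F G H : α → ℝ)
    (h : ∀ x ∈ B, F x = G x + H x) :
    (B.map F).sum = (B.map G).sum + (B.map H).sum := by
  induction B with
  | nil => simp
  | cons a l ih =>
    simp only [List.map_cons, List.sum_cons]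
    rw [h a List.mem_cons_self, ih (fun x hx => h x (List.mem_cons_of_mem a hx))]
    ring

lemma list_sum_congr {α : Type*} (B : List α) (F G : α → ℝ)
    (h : ∀ x ∈ B, F x = G x) :
    (B.map F).sum = (B.map G).sum := by
  induction B with
  | nil => simp
  | cons a l ih =>
    simp only [List.map_cons, List.sum_cons]
    rw [h a List.mem_cons_self, ih (fun x hx => h x (List.mem_cons_of_mem a hx))]

lemma list_sum_nonneg {α : Type*} (B : List α) (F : α → ℝ)
    (h : ∀ x ∈ B, 0 ≤ F x) : 0 ≤ (B.map F).sum := by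
  induction B with
  | nil => simp
  | cons a l ih =>
    simp only [List.map_cons, List.sum_cons]
    have := h a List.mem_cons_self
    have := ih (fun x hx => h x (List.mem_cons_of_mem a hx))
    linarith

-- ## list perturbation

lemma pert_list (B : List ((Fin n → ℝ) × ℝ)) (q v : Fin n → ℝ) :
    ∃ ε₀ > 0, ∀ ε : ℝ, 0 < ε → ε ≤ ε₀ → ∀ bw ∈ B,
      maxSurplus bw.1 (q + ε • v) = maxSurplus bw.1 q - ε * dminV bw.1 q (extVec v) ∧
      ∀ i, (i ∈ demandedSet bw.1 (q + ε • v) ↔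
        i ∈ demandedSet bw.1 q ∧ extVec v i = dminV bw.1 q (extVec v)) := by
  induction B with
  | nil => exact ⟨1, one_pos, fun ε _ _ bw h => absurd h List.not_mem_nil⟩
  | cons a l ih =>
    obtain ⟨ε₁, hε₁, h₁⟩ := ih
    obtain ⟨ε₂, hε₂, h₂⟩ := pert_single a.1 q v
    refine ⟨min ε₁ ε₂, lt_min hε₁ hε₂, fun ε hε hεle bw hbw => ?_⟩
    rcases List.mem_cons.1 hbw with h | h
    · subst h; exact h₂ ε hε (hεle.trans (min_le_right _ _))
    · exact h₁ ε hε (hεle.trans (min_le_left _ _)) bw h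

def slopeSum (B : List ((Fin n → ℝ) × ℝ)) (q : Fin n → ℝ) (u : Fin (n+1) → ℝ) : ℝ :=
  (B.map fun bw => bw.2 * dminV bw.1 q u).sum

def oscSum (B : List ((Fin n → ℝ) × ℝ)) (q : Fin n → ℝ) (u : Fin (n+1) → ℝ) : ℝ :=
  (B.map fun bw => bw.2 * (dmaxV bw.1 q u - dminV bw.1 q u)).sum

open Classical in
def crossSum (B : List ((Fin n → ℝ) × ℝ)) (q : Fin n → ℝ)
    (L U : Finset (Fin (n+1))) : ℝ :=
  (B.map fun bw => if (demandedSet bw.1 q ∩ L).Nonempty ∧ (demandedSet bw.1 q ∩ U).Nonempty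
    then bw.2 else 0).sum

lemma extVec_neg (v : Fin n → ℝ) : extVec (-v) = fun i => - extVec v i := by
  funext i
  induction i using Fin.cases with
  | zero => simp [extVec]
  | succ j => simp [extVec]

lemma list_sum_neg {α : Type*} (B : List α) (F : α → ℝ) :
    (B.map (fun x => - F x)).sum = - (B.map F).sum := by
  induction B with
  | nil => simp
  | cons a l ih => simp only [List.map_cons, List.sum_cons, ih]; ring

lemma list_sum_mul_left {α : Type*} (B : List α) (c : ℝ) (F : α → ℝ) :
    (B.map (fun x => c * F x)).sum = c * (B.map F).sum := by
  induction B with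
  | nil => simp
  | cons a l ih => simp only [List.map_cons, List.sum_cons, ih]; ring

lemma slopeSum_add_neg (B : List ((Fin n → ℝ) × ℝ)) (q v : Fin n → ℝ) :
    slopeSum B q (extVec v) + slopeSum B q (extVec (-v)) = - oscSum B q (extVec v) := by
  have h1 : oscSum B q (extVec v) =
      (B.map fun bw => - (bw.2 * dminV bw.1 q (extVec v))).sum
      + (B.map fun bw => - (bw.2 * dminV bw.1 q (extVec (-v)))).sum := by
    apply list_sum_split
    intro bw _
    rw [extVec_neg, dminV_neg]
    ring
  rw [slopeSum, slopeSum, h1,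
    list_sum_neg B (fun bw => bw.2 * dminV bw.1 q (extVec v)),
    list_sum_neg B (fun bw => bw.2 * dminV bw.1 q (extVec (-v)))]
  ring

lemma pert_f (B : List ((Fin n → ℝ) × ℝ)) (q v : Fin n → ℝ) :
    ∃ ε₀ > 0, ∀ ε : ℝ, 0 < ε → ε ≤ ε₀ →
      indirectUtility B (q + ε • v) = indirectUtility B q - ε * slopeSum B q (extVec v) := by
  obtain ⟨ε₀, hε₀, h⟩ := pert_list B q v
  refine ⟨ε₀, hε₀, fun ε hε hεle => ?_⟩
  have := list_sum_split B (fun bw => bw.2 * maxSurplus bw.1 (q + ε • v))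
    (fun bw => bw.2 * maxSurplus bw.1 q) (fun bw => - (ε * (bw.2 * dminV bw.1 q (extVec v))))
    (fun bw hbw => by rw [(h ε hε hεle bw hbw).1]; ring)
  rw [indirectUtility, this, indirectUtility, slopeSum]
  rw [list_sum_neg B (fun bw => ε * (bw.2 * dminV bw.1 q (extVec v))),
    list_sum_mul_left B ε (fun bw => bw.2 * dminV bw.1 q (extVec v))]
  ring


-- ## small sup'/inf' helpers

lemma dmaxV_eq (b q : Fin n → ℝ) (u : Fin (n+1) → ℝ) (c : ℝ)
    (h : ∀ k ∈ demandedSet b q, u k ≤ c) (h2 : ∃ k ∈ demandedSet b q, u k = c) :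
    dmaxV b q u = c := by
  obtain ⟨k, hk, hke⟩ := h2
  exact le_antisymm (Finset.sup'_le _ _ h) (by rw [← hke]; exact Finset.le_sup' u hk)

lemma dminV_eq (b q : Fin n → ℝ) (u : Fin (n+1) → ℝ) (c : ℝ)
    (h : ∀ k ∈ demandedSet b q, c ≤ u k) (h2 : ∃ k ∈ demandedSet b q, u k = c) :
    dminV b q u = c := by
  obtain ⟨k, hk, hke⟩ := h2
  exact le_antisymm (by rw [← hke]; exact Finset.inf'_le u hk) (Finset.le_inf' _ _ h)

lemma osc_zero_of_const (b q : Fin n → ℝ) (u : Fin (n+1) → ℝ)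
    (h : ∀ k ∈ demandedSet b q, ∀ l ∈ demandedSet b q, u k = u l) :
    dmaxV b q u = dminV b q u := by
  obtain ⟨k₀, hk₀⟩ := demandedSet_nonempty b q
  apply le_antisymm
  · apply Finset.sup'_le
    intro k hk
    apply Finset.le_inf'
    intro l hl
    exact (h k hk l hl).le
  · exact (Finset.inf'_le u hk₀).trans (Finset.le_sup' u hk₀)

lemma inter_singleton_nonempty_iff {α : Type*} [DecidableEq α] {S : Finset α} {i : α} :
    (S ∩ {i}).Nonempty ↔ i ∈ S := by
  constructor
  · rintro ⟨x, hx⟩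
    rw [Finset.mem_inter, Finset.mem_singleton] at hx
    obtain ⟨h1, h2⟩ := hx
    subst h2; exact h1
  · intro h
    exact ⟨i, Finset.mem_inter.2 ⟨h, Finset.mem_singleton_self i⟩⟩

-- ## convexity gives osc nonneg

lemma convex_oscSum (B : List ((Fin n → ℝ) × ℝ))
    (hconv : ConvexOn ℝ Set.univ (indirectUtility B)) (q v : Fin n → ℝ) :
    0 ≤ oscSum B q (extVec v) := by
  obtain ⟨ε₁, hε₁, h₁⟩ := pert_f B q v
  obtain ⟨ε₂, hε₂, h₂⟩ := pert_f B q (-v)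
  set ε := min ε₁ ε₂ with hε
  have hεpos : 0 < ε := lt_min hε₁ hε₂
  have e1 := h₁ ε hεpos (min_le_left _ _)
  have e2 := h₂ ε hεpos (min_le_right _ _)
  have hmid : q = (1/2 : ℝ) • (q + ε • v) + (1/2 : ℝ) • (q + ε • (-v)) := by
    funext j
    simp only [Pi.add_apply, Pi.smul_apply, Pi.neg_apply, smul_eq_mul]
    ring
  have := hconv.2 (Set.mem_univ (q + ε • v)) (Set.mem_univ (q + ε • (-v)))
    (by norm_num : (0:ℝ) ≤ 1/2) (by norm_num : (0:ℝ) ≤ 1/2) (by norm_num)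
  rw [← hmid] at this
  simp only [smul_eq_mul] at this
  rw [e1, e2] at this
  have hsum : slopeSum B q (extVec v) + slopeSum B q (extVec (-v)) ≤ 0 := by nlinarith
  have := slopeSum_add_neg B q v
  linarith

-- ## forward direction

lemma forward_marginal (B : List ((Fin n → ℝ) × ℝ))
    (hosc : ∀ (q v : Fin n → ℝ), 0 ≤ oscSum B q (extVec v))
    (p : Fin n → ℝ) (i i' : Fin (n+1)) (hii : i ≠ i') :
    0 ≤ marginalWeight B p i i' := by
  classical
  set u₂ : Fin (n+1) → ℝ := fun j => (if j = i ∨ j = i' then (0:ℝ) else 1) -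
    (if (0 : Fin (n+1)) = i ∨ (0 : Fin (n+1)) = i' then (0:ℝ) else 1) with hu₂
  set ud : Fin (n+1) → ℝ := fun j => (if j = i then (1:ℝ) else 0) -
    (if (0 : Fin (n+1)) = i then (1:ℝ) else 0) with hud
  set v₂ : Fin n → ℝ := fun j => u₂ j.succ with hv₂
  set d : Fin n → ℝ := fun j => ud j.succ with hd
  set c₀ : ℝ := if (0 : Fin (n+1)) = i ∨ (0 : Fin (n+1)) = i' then (0:ℝ) else 1 with hc₀
  set k₀ : ℝ := if (0 : Fin (n+1)) = i then (1:ℝ) else 0 with hk₀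
  have hev₂ : extVec v₂ = u₂ := by
    funext k
    induction k using Fin.cases with
    | zero => simp only [extVec, Fin.cons_zero, hu₂]; rw [sub_self]
    | succ j => simp only [extVec, Fin.cons_succ, hv₂]
  have hed : extVec d = ud := by
    funext k
    induction k using Fin.cases with
    | zero => simp only [extVec, Fin.cons_zero, hud]; rw [sub_self]
    | succ j => simp only [extVec, Fin.cons_succ, hd]
  have hu₂val : ∀ k, u₂ k = (if k = i ∨ k = i' then (0:ℝ) else 1) - c₀ := fun k => rfl
  have hudval : ∀ k, ud k = (if k = i then (1:ℝ) else 0) - k₀ := fun k => rfl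
  obtain ⟨ε₀, hε₀, hplist⟩ := pert_list B p v₂
  have h := hplist ε₀ hε₀ le_rfl
  set p' := p + ε₀ • v₂ with hp'def
  have hkey : marginalWeight B p i i' = oscSum B p' (extVec d) := by
    unfold marginalWeight oscSum
    apply list_sum_congr
    intro bw hbw
    obtain ⟨-, hS'⟩ := h bw hbw
    rw [hev₂] at hS'
    rw [hed]
    set S := demandedSet bw.1 p with hSdef
    set S' := demandedSet bw.1 p' with hS'def
    by_cases hcase : i ∈ S ∨ i' ∈ S
    · -- the minimum of u₂ on S is -c₀
      have hm₂ : dminV bw.1 p u₂ = -c₀ := by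
        apply dminV_eq
        · intro k _
          rw [hu₂val k]
          by_cases hk : k = i ∨ k = i' <;> simp [hk]
        · rcases hcase with hc | hc
          · exact ⟨i, hc, by rw [hu₂val i]; simp⟩
          · exact ⟨i', hc, by rw [hu₂val i']; simp⟩
      have hmem : ∀ k, k ∈ S' ↔ k ∈ S ∧ (k = i ∨ k = i') := by
        intro k
        rw [hS' k, hm₂]
        constructor
        · rintro ⟨hkS, hval⟩
          refine ⟨hkS, ?_⟩
          by_contra hk
          rw [hu₂val k, if_neg hk] at hval
          have : (1:ℝ) = 0 := by linarith
          norm_num at this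
        · rintro ⟨hkS, hk⟩
          exact ⟨hkS, by rw [hu₂val k, if_pos hk]; ring⟩
      by_cases hboth : i ∈ S ∧ i' ∈ S
      · have hcond : Demands bw.1 p i ∧ Demands bw.1 p i' :=
          ⟨mem_demandedSet.1 hboth.1, mem_demandedSet.1 hboth.2⟩
        rw [if_pos hcond]
        have hiS' : i ∈ S' := (hmem i).2 ⟨hboth.1, Or.inl rfl⟩
        have hi'S' : i' ∈ S' := (hmem i').2 ⟨hboth.2, Or.inr rfl⟩
        have hudi : ud i = 1 - k₀ := by rw [hudval i]; simp
        have hudi' : ud i' = - k₀ := by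
          rw [hudval i', if_neg (fun hc => hii hc.symm)]; ring
        have hmax : dmaxV bw.1 p' ud = 1 - k₀ := by
          apply dmaxV_eq
          · intro k hk
            rcases ((hmem k).1 hk).2 with hk' | hk' <;> subst hk'
            · rw [hudi]
            · rw [hudi']; linarith
          · exact ⟨i, hiS', hudi⟩
        have hmin : dminV bw.1 p' ud = - k₀ := by
          apply dminV_eq
          · intro k hk
            rcases ((hmem k).1 hk).2 with hk' | hk' <;> subst hk'
            · rw [hudi]; linarith
            · rw [hudi']
          · exact ⟨i', hi'S', hudi'⟩
        rw [hmax, hmin]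
        ring
      · have hcond : ¬ (Demands bw.1 p i ∧ Demands bw.1 p i') := by
          intro hc
          exact hboth ⟨mem_demandedSet.2 hc.1, mem_demandedSet.2 hc.2⟩
        rw [if_neg hcond]
        have hconst : ∀ k ∈ S', ∀ l ∈ S', ud k = ud l := by
          intro k hk l hl
          obtain ⟨hkS, hki⟩ := (hmem k).1 hk
          obtain ⟨hlS, hli⟩ := (hmem l).1 hl
          rcases hki with h1 | h1 <;> rcases hli with h2 | h2 <;> subst h1 <;> subst h2
          · rfl
          · exact absurd ⟨hkS, hlS⟩ hboth
          · exact absurd ⟨hlS, hkS⟩ hboth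
          · rfl
        rw [osc_zero_of_const bw.1 p' ud hconst]
        ring
    · -- S misses both i and i'
      push_neg at hcase
      have hcond : ¬ (Demands bw.1 p i ∧ Demands bw.1 p i') := by
        intro hc
        exact hcase.1 (mem_demandedSet.2 hc.1)
      rw [if_neg hcond]
      have hconst : ∀ k ∈ S', ∀ l ∈ S', ud k = ud l := by
        intro k hk l hl
        have hkS : k ∈ S := ((hS' k).1 hk).1
        have hlS : l ∈ S := ((hS' l).1 hl).1
        have hki : k ≠ i := fun hc => hcase.1 (hc ▸ hkS)
        have hli : l ≠ i := fun hc => hcase.1 (hc ▸ hlS)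
        rw [hudval k, hudval l, if_neg hki, if_neg hli]
      rw [osc_zero_of_const bw.1 p' ud hconst]
      ring
  rw [hkey]
  exact hosc p' d


-- ## single-good perturbation

lemma pert_good (B : List ((Fin n → ℝ) × ℝ)) (q : Fin n → ℝ) (g₀ : Fin (n+1)) :
    ∃ r : Fin n → ℝ, ∀ bw ∈ B, ∀ k : Fin (n+1),
      k ∈ demandedSet bw.1 r ↔
        (if g₀ ∈ demandedSet bw.1 q then k = g₀ else k ∈ demandedSet bw.1 q) := by
  classical
  set ug : Fin (n+1) → ℝ := fun j => (if j = g₀ then (-1:ℝ) else 0) -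
    (if (0 : Fin (n+1)) = g₀ then (-1:ℝ) else 0) with hug
  set vg : Fin n → ℝ := fun j => ug j.succ with hvg
  set c : ℝ := if (0 : Fin (n+1)) = g₀ then (-1:ℝ) else 0 with hc
  have hev : extVec vg = ug := by
    funext k
    induction k using Fin.cases with
    | zero => simp only [extVec, Fin.cons_zero, hug]; rw [sub_self]
    | succ j => simp only [extVec, Fin.cons_succ, hvg]
  have hugval : ∀ k, ug k = (if k = g₀ then (-1:ℝ) else 0) - c := fun k => rfl
  obtain ⟨ε₀, hε₀, hplist⟩ := pert_list B q vg
  refine ⟨q + ε₀ • vg, fun bw hbw k => ?_⟩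
  obtain ⟨-, hS'⟩ := hplist ε₀ hε₀ le_rfl bw hbw
  rw [hev] at hS'
  set S := demandedSet bw.1 q with hSdef
  by_cases hg : g₀ ∈ S
  · rw [if_pos hg]
    have hm : dminV bw.1 q ug = -1 - c := by
      apply dminV_eq
      · intro l _
        rw [hugval l]
        by_cases hl : l = g₀ <;> simp [hl]
      · exact ⟨g₀, hg, by rw [hugval g₀, if_pos rfl]⟩
    rw [hS' k, hm]
    constructor
    · rintro ⟨hkS, hval⟩
      by_contra hk
      rw [hugval k, if_neg hk] at hval
      have : (1:ℝ) = 0 := by linarith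
      norm_num at this
    · intro hk
      exact ⟨hk ▸ hg, by rw [hk, hugval g₀, if_pos rfl]⟩
  · rw [if_neg hg]
    have hm : dminV bw.1 q ug = -c := by
      apply dminV_eq
      · intro l hl
        have : l ≠ g₀ := fun hc' => hg (hc' ▸ hl)
        rw [hugval l, if_neg this]; ring_nf; exact le_refl _
      · obtain ⟨l, hl⟩ := demandedSet_nonempty bw.1 q
        have : l ≠ g₀ := fun hc' => hg (hc' ▸ hl)
        exact ⟨l, hl, by rw [hugval l, if_neg this]; ring⟩
    rw [hS' k, hm]
    constructor
    · exact fun h => h.1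
    · intro hk
      have : k ≠ g₀ := fun hc' => hg (hc' ▸ hk)
      exact ⟨hk, by rw [hugval k, if_neg this]; ring⟩

-- ## crossSum lemmas

lemma crossSum_comm (B : List ((Fin n → ℝ) × ℝ)) (q : Fin n → ℝ)
    (L U : Finset (Fin (n+1))) : crossSum B q L U = crossSum B q U L := by
  classical
  unfold crossSum
  apply list_sum_congr
  intro bw _
  rw [if_congr and_comm rfl rfl]

lemma crossSum_step (B : List ((Fin n → ℝ) × ℝ)) (q : Fin n → ℝ)
    (L U : Finset (Fin (n+1))) (u₀ : Fin (n+1)) (hu₀ : u₀ ∈ U) (hdisj : Disjoint L U) :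
    ∃ r, crossSum B q L U = crossSum B q L {u₀} + crossSum B r L (U.erase u₀) := by
  classical
  obtain ⟨r, hr⟩ := pert_good B q u₀
  refine ⟨r, ?_⟩
  unfold crossSum
  apply list_sum_split
  intro bw hbw
  set S := demandedSet bw.1 q with hSdef
  set Sr := demandedSet bw.1 r with hSrdef
  have hrk := hr bw hbw
  have hu₀L : u₀ ∉ L := fun hc => (Finset.disjoint_left.1 hdisj hc) hu₀
  by_cases hg : u₀ ∈ S
  · have hSr : ∀ k, k ∈ Sr ↔ k = u₀ := by
      intro k; rw [hrk k, if_pos hg]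
    have h2 : ¬ (Sr ∩ L).Nonempty := by
      rintro ⟨x, hx⟩
      rw [Finset.mem_inter] at hx
      exact hu₀L ((hSr x).1 hx.1 ▸ hx.2)
    have h3 : (S ∩ {u₀}).Nonempty := inter_singleton_nonempty_iff.2 hg
    have h4 : (S ∩ U).Nonempty := ⟨u₀, Finset.mem_inter.2 ⟨hg, hu₀⟩⟩
    have hC3 : ¬ ((Sr ∩ L).Nonempty ∧ (Sr ∩ U.erase u₀).Nonempty) := fun hc => h2 hc.1
    have hc1c2 : ((S ∩ L).Nonempty ∧ (S ∩ U).Nonempty) ↔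
        ((S ∩ L).Nonempty ∧ (S ∩ {u₀}).Nonempty) :=
      ⟨fun hc => ⟨hc.1, h3⟩, fun hc => ⟨hc.1, h4⟩⟩
    rw [if_neg hC3, add_zero, if_congr hc1c2 rfl rfl]
  · have hSr : Sr = S := by
      ext k
      rw [hrk k, if_neg hg]
    have h3 : ¬ (S ∩ {u₀}).Nonempty := fun hc => hg (inter_singleton_nonempty_iff.1 hc)
    have hUU' : (S ∩ U).Nonempty ↔ (S ∩ (U.erase u₀)).Nonempty := by
      constructor
      · rintro ⟨x, hx⟩
        rw [Finset.mem_inter] at hx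
        have : x ≠ u₀ := fun hc => hg (hc ▸ hx.1)
        exact ⟨x, Finset.mem_inter.2 ⟨hx.1, Finset.mem_erase.2 ⟨this, hx.2⟩⟩⟩
      · rintro ⟨x, hx⟩
        rw [Finset.mem_inter] at hx
        exact ⟨x, Finset.mem_inter.2 ⟨hx.1, Finset.mem_erase.1 hx.2 |>.2⟩⟩
    have hC2 : ¬ ((S ∩ L).Nonempty ∧ (S ∩ {u₀}).Nonempty) := fun hc => h3 hc.2
    have hc1c3 : ((S ∩ L).Nonempty ∧ (S ∩ U).Nonempty) ↔
        ((Sr ∩ L).Nonempty ∧ (Sr ∩ U.erase u₀).Nonempty) := by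
      rw [hSr]
      exact and_congr_right (fun _ => hUU')
    rw [if_neg hC2, zero_add, if_congr hc1c3 rfl rfl]

lemma crossSum_nonneg (B : List ((Fin n → ℝ) × ℝ))
    (H : ∀ (p : Fin n → ℝ) (i i' : Fin (n+1)), i ≠ i' → 0 ≤ marginalWeight B p i i') :
    ∀ (N : ℕ) (q : Fin n → ℝ) (L U : Finset (Fin (n+1))), L.card + U.card ≤ N →
      L.Nonempty → U.Nonempty → Disjoint L U → 0 ≤ crossSum B q L U := by
  classical
  intro N
  induction N with
  | zero =>
    intro q L U hN hL hU _
    have := Finset.card_pos.2 hL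
    have := Finset.card_pos.2 hU
    omega
  | succ N ih =>
    intro q L U hN hL hU hdisj
    by_cases hU2 : 2 ≤ U.card
    · obtain ⟨u₀, hu₀⟩ := hU
      obtain ⟨r, hsplit⟩ := crossSum_step B q L U u₀ hu₀ hdisj
      have hU'ne : (U.erase u₀).Nonempty := by
        rw [← Finset.card_pos, Finset.card_erase_of_mem hu₀]; omega
      have h1 : 0 ≤ crossSum B q L {u₀} := by
        apply ih q L {u₀}
        · rw [Finset.card_singleton]; omega
        · exact hL
        · exact ⟨u₀, Finset.mem_singleton_self u₀⟩
        · rw [Finset.disjoint_singleton_right]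
          exact fun hc => (Finset.disjoint_left.1 hdisj hc) hu₀
      have h2 : 0 ≤ crossSum B r L (U.erase u₀) := by
        apply ih r L (U.erase u₀)
        · rw [Finset.card_erase_of_mem hu₀]; omega
        · exact hL
        · exact hU'ne
        · exact Finset.disjoint_of_subset_right (Finset.erase_subset u₀ U) hdisj
      rw [hsplit]; linarith
    · by_cases hL2 : 2 ≤ L.card
      · obtain ⟨l₀, hl₀⟩ := hL
        obtain ⟨r, hsplit⟩ := crossSum_step B q U L l₀ hl₀ hdisj.symm
        have hL'ne : (L.erase l₀).Nonempty := by
          rw [← Finset.card_pos, Finset.card_erase_of_mem hl₀]; omega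
        have h1 : 0 ≤ crossSum B q U {l₀} := by
          rw [crossSum_comm]
          apply ih q {l₀} U
          · rw [Finset.card_singleton]; omega
          · exact ⟨l₀, Finset.mem_singleton_self l₀⟩
          · exact hU
          · rw [Finset.disjoint_singleton_left]
            exact fun hc => (Finset.disjoint_left.1 hdisj hl₀) hc
        have h2 : 0 ≤ crossSum B r U (L.erase l₀) := by
          rw [crossSum_comm]
          apply ih r (L.erase l₀) U
          · rw [Finset.card_erase_of_mem hl₀]; omega
          · exact hL'ne
          · exact hU
          · exact Finset.disjoint_of_subset_left (Finset.erase_subset l₀ L) hdisj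
        rw [crossSum_comm, hsplit]; linarith
      · -- base case : both singletons
        have hL1 : L.card = 1 := by
          have := Finset.card_pos.2 hL; omega
        have hU1 : U.card = 1 := by
          have := Finset.card_pos.2 hU; omega
        obtain ⟨i, hi⟩ := Finset.card_eq_one.1 hL1
        obtain ⟨i', hi'⟩ := Finset.card_eq_one.1 hU1
        subst hi; subst hi'
        have hne : i ≠ i' := by
          rw [Finset.disjoint_singleton] at hdisj
          exact hdisj
        have : crossSum B q {i} {i'} = marginalWeight B q i i' := by
          unfold crossSum marginalWeight
          apply list_sum_congr
          intro bw _
          rw [if_congr (by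
            rw [inter_singleton_nonempty_iff, inter_singleton_nonempty_iff,
              mem_demandedSet, mem_demandedSet]) rfl rfl]
        rw [this]
        exact H q i i' hne

-- ## oscSum from crossSum

lemma oscSum_nonneg_aux (B : List ((Fin n → ℝ) × ℝ))
    (hcross : ∀ (q : Fin n → ℝ) (L U : Finset (Fin (n+1))),
      L.Nonempty → U.Nonempty → Disjoint L U → 0 ≤ crossSum B q L U) :
    ∀ (N : ℕ) (u : Fin (n+1) → ℝ) (q : Fin n → ℝ),
      (Finset.univ.image u).card ≤ N → 0 ≤ oscSum B q u := by
  classical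
  intro N
  induction N with
  | zero =>
    intro u q hN
    exfalso
    have : (Finset.univ.image u).Nonempty :=
      ⟨u 0, Finset.mem_image_of_mem u (Finset.mem_univ 0)⟩
    have := Finset.card_pos.2 this
    omega
  | succ N ih =>
    intro u q hN
    set T := Finset.univ.image u with hT
    have hTne : T.Nonempty := ⟨u 0, Finset.mem_image_of_mem u (Finset.mem_univ 0)⟩
    by_cases hT1 : T.card ≤ 1
    · -- u is constant
      have hconst : ∀ k l : Fin (n+1), u k = u l := by
        intro k l
        exact Finset.card_le_one.1 hT1 (u k)
          (Finset.mem_image_of_mem u (Finset.mem_univ k)) (u l)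
          (Finset.mem_image_of_mem u (Finset.mem_univ l))
      unfold oscSum
      apply list_sum_nonneg
      intro bw _
      rw [osc_zero_of_const bw.1 q u (fun k _ l _ => hconst k l)]
      simp
    · push_neg at hT1
      set t1 := T.max' hTne with ht1
      set A := Finset.univ.filter (fun j => u j = t1) with hA
      set Ac := Finset.univ.filter (fun j => ¬ u j = t1) with hAc
      set T' := T.erase t1 with hT'
      have hT'ne : T'.Nonempty := by
        rw [← Finset.card_pos, Finset.card_erase_of_mem (T.max'_mem hTne)]; omega
      set t2 := T'.max' hT'ne with ht2
      have ht2T' : t2 ∈ T' := T'.max'_mem hT'ne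
      have ht2ne : t2 ≠ t1 := (Finset.mem_erase.1 ht2T').1
      have ht2lt : t2 < t1 :=
        lt_of_le_of_ne (T.le_max' t2 (Finset.mem_of_mem_erase ht2T')) ht2ne
      have hle_t1 : ∀ j, u j ≤ t1 :=
        fun j => T.le_max' (u j) (Finset.mem_image_of_mem u (Finset.mem_univ j))
      have hnotA : ∀ j, j ∉ A → u j ≤ t2 := by
        intro j hj
        have hne : u j ≠ t1 := by
          intro hc
          exact hj (Finset.mem_filter.2 ⟨Finset.mem_univ j, hc⟩)
        exact T'.le_max' (u j) (Finset.mem_erase.2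
          ⟨hne, Finset.mem_image_of_mem u (Finset.mem_univ j)⟩)
      have hmemA : ∀ j, j ∈ A ↔ u j = t1 := by
        intro j; rw [hA, Finset.mem_filter]; simp
      have hmemAc : ∀ j, j ∈ Ac ↔ ¬ u j = t1 := by
        intro j; rw [hAc, Finset.mem_filter]; simp
      set u' : Fin (n+1) → ℝ := fun j => min (u j) t2 with hu'
      have hu'val : ∀ j, u' j ≤ t2 := fun j => min_le_right _ _
      have hu'le : ∀ j, u' j ≤ u j := fun j => min_le_left _ _
      have hu'A : ∀ j ∈ A, u' j = t2 := by
        intro j hj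
        rw [hu']
        exact min_eq_right (by rw [(hmemA j).1 hj] at *; exact ht2lt.le)
      have hu'nA : ∀ j ∉ A, u' j = u j := by
        intro j hj
        exact min_eq_left (hnotA j hj)
      have himg : (Finset.univ.image u').card ≤ N := by
        have hsub : Finset.univ.image u' ⊆ T' := by
          intro x hx
          obtain ⟨j, -, hj⟩ := Finset.mem_image.1 hx
          by_cases hjA : j ∈ A
          · rw [← hj, hu'A j hjA]; exact ht2T'
          · rw [← hj, hu'nA j hjA]
            exact Finset.mem_erase.2 ⟨fun hc => hjA ((hmemA j).2 hc),
              Finset.mem_image_of_mem u (Finset.mem_univ j)⟩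
        have := Finset.card_le_card hsub
        rw [Finset.card_erase_of_mem (T.max'_mem hTne)] at this
        omega
      have hAne : A.Nonempty := by
        obtain ⟨j, -, hj⟩ := Finset.mem_image.1 (T.max'_mem hTne)
        exact ⟨j, (hmemA j).2 hj⟩
      have hAcne : Ac.Nonempty := by
        obtain ⟨j, -, hj⟩ := Finset.mem_image.1 (Finset.mem_of_mem_erase ht2T')
        exact ⟨j, (hmemAc j).2 (by rw [hj]; exact ht2ne)⟩
      have hdisjA : Disjoint A Ac := by
        rw [Finset.disjoint_left]
        intro j hj hj'
        exact (hmemAc j).1 hj' ((hmemA j).1 hj)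
      -- pointwise identity
      have hsplit : oscSum B q u = oscSum B q u' + (t1 - t2) * crossSum B q A Ac := by
        unfold oscSum crossSum
        rw [← list_sum_mul_left B (t1 - t2)]
        apply list_sum_split
        intro bw hbw
        set S := demandedSet bw.1 q with hSdef
        by_cases hSA : (S ∩ A).Nonempty
        · by_cases hSAc : (S ∩ Ac).Nonempty
          · -- crossing : dmax u = t1, dmax u' = t2, dmin u = dmin u'
            obtain ⟨a, ha⟩ := id hSA
            rw [Finset.mem_inter] at ha
            obtain ⟨c', hc'⟩ := id hSAc
            rw [Finset.mem_inter] at hc'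
            have hmax : dmaxV bw.1 q u = t1 :=
              dmaxV_eq _ _ _ _ (fun k _ => hle_t1 k) ⟨a, ha.1, (hmemA a).1 ha.2⟩
            have hmax' : dmaxV bw.1 q u' = t2 :=
              dmaxV_eq _ _ _ _ (fun k _ => hu'val k) ⟨a, ha.1, hu'A a ha.2⟩
            have hminmin : dminV bw.1 q u = dminV bw.1 q u' := by
              apply le_antisymm
              · apply Finset.le_inf'
                intro l hl
                by_cases hlA : l ∈ A
                · rw [hu'A l hlA]
                  calc dminV bw.1 q u ≤ u c' := Finset.inf'_le u hc'.1
                    _ ≤ t2 := hnotA c' (fun hcc =>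
                        (hmemAc c').1 hc'.2 ((hmemA c').1 hcc))
                · rw [hu'nA l hlA]
                  exact Finset.inf'_le u hl
              · apply Finset.le_inf'
                intro l hl
                exact (Finset.inf'_le u' hl).trans (hu'le l)
            rw [hmax, hmax', hminmin,
              if_pos (⟨hSA, hSAc⟩ : (S ∩ A).Nonempty ∧ (S ∩ Ac).Nonempty)]
            ring
          · -- S ⊆ A : everything constant t1 resp t2
            have hSsubA : ∀ l ∈ S, l ∈ A := by
              intro l hl
              by_contra hc
              exact hSAc ⟨l, Finset.mem_inter.2 ⟨hl, (hmemAc l).2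
                (fun hcc => hc ((hmemA l).2 hcc))⟩⟩
            have hmax : dmaxV bw.1 q u = t1 := by
              obtain ⟨l, hl⟩ := demandedSet_nonempty bw.1 q
              exact dmaxV_eq _ _ _ _ (fun k _ => hle_t1 k) ⟨l, hl, (hmemA l).1 (hSsubA l hl)⟩
            have hmin : dminV bw.1 q u = t1 := by
              obtain ⟨l, hl⟩ := demandedSet_nonempty bw.1 q
              exact dminV_eq _ _ _ _ (fun k hk => ((hmemA k).1 (hSsubA k hk)).ge)
                ⟨l, hl, (hmemA l).1 (hSsubA l hl)⟩
            have hmax' : dmaxV bw.1 q u' = t2 := by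
              obtain ⟨l, hl⟩ := demandedSet_nonempty bw.1 q
              exact dmaxV_eq _ _ _ _ (fun k _ => hu'val k) ⟨l, hl, hu'A l (hSsubA l hl)⟩
            have hmin' : dminV bw.1 q u' = t2 := by
              obtain ⟨l, hl⟩ := demandedSet_nonempty bw.1 q
              exact dminV_eq _ _ _ _ (fun k hk => (hu'A k (hSsubA k hk)).ge)
                ⟨l, hl, hu'A l (hSsubA l hl)⟩
            rw [hmax, hmin, hmax', hmin', if_neg (fun hc => hSAc hc.2)]
            ring
        · -- S ∩ A = ∅ : u' = u on S
          have hSnA : ∀ l ∈ S, l ∉ A := by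
            intro l hl hc
            exact hSA ⟨l, Finset.mem_inter.2 ⟨hl, hc⟩⟩
          have hmax : dmaxV bw.1 q u = dmaxV bw.1 q u' :=
            (Finset.sup'_congr (demandedSet_nonempty bw.1 q) rfl
              (fun l hl => (hu'nA l (hSnA l hl)).symm))
          have hmin : dminV bw.1 q u = dminV bw.1 q u' :=
            (Finset.inf'_congr (demandedSet_nonempty bw.1 q) rfl
              (fun l hl => (hu'nA l (hSnA l hl)).symm))
          rw [hmax, hmin, if_neg (fun hc => hSA hc.1)]
          ring
      rw [hsplit]
      have h1 := ih u' q himg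
      have h2 := hcross q A Ac hAne hAcne hdisjA
      nlinarith


lemma oneDim (g : ℝ → ℝ)
    (h : ∀ t : ℝ, ∃ ε₀ > 0, ∃ a b : ℝ, 0 ≤ a + b ∧
      ∀ ε : ℝ, 0 < ε → ε ≤ ε₀ → g (t + ε) = g t + ε * a ∧ g (t - ε) = g t + ε * b) :
    ConvexOn ℝ Set.univ g := by
  have hcont : Continuous g := by
    rw [continuous_iff_continuousAt]
    intro t
    obtain ⟨ε₀, hε₀, a, b, hab, hg⟩ := h t
    apply continuousAt_of_locally_lipschitz hε₀ (|a| + |b|)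
    intro y hy
    rw [Real.dist_eq, abs_sub_lt_iff] at hy
    rw [Real.dist_eq, Real.dist_eq]
    rcases lt_trichotomy y t with hlt | heq | hgt
    · have h1 : 0 < t - y := by linarith
      have h2 : t - y ≤ ε₀ := by linarith [hy.2]
      have heq1 := (hg (t - y) h1 h2).2
      have hyeq : t - (t - y) = y := by ring
      rw [hyeq] at heq1
      rw [heq1]
      have heq2 : g t + (t - y) * b - g t = (t - y) * b := by ring
      rw [heq2, abs_mul, abs_of_pos h1]
      have h3 : |y - t| = t - y := by rw [abs_sub_comm, abs_of_pos h1]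
      rw [h3]
      nlinarith [abs_nonneg a, abs_nonneg b]
    · subst heq; simp
    · have h1 : 0 < y - t := by linarith
      have h2 : y - t ≤ ε₀ := by linarith [hy.1]
      have heq1 := (hg (y - t) h1 h2).1
      have hyeq : t + (y - t) = y := by ring
      rw [hyeq] at heq1
      rw [heq1]
      have heq2 : g t + (y - t) * a - g t = (y - t) * a := by ring
      rw [heq2, abs_mul, abs_of_pos h1]
      nlinarith [abs_nonneg a, abs_nonneg b]
  -- key chord claim
  have key : ∀ x y : ℝ, x < y → ∀ z, x ≤ z → z ≤ y →
      g z ≤ g x + (z - x) / (y - x) * (g y - g x) := by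
    intro x y hxy z hxz hzy
    set m : ℝ := (g y - g x) / (y - x) with hm
    set hfun : ℝ → ℝ := fun s => g s - (g x + (s - x) * m) with hhfun
    have hcont' : ContinuousOn hfun (Set.Icc x y) := by
      apply Continuous.continuousOn
      fun_prop
    have hhx : hfun x = 0 := by simp [hhfun]
    have hyx' : y - x ≠ 0 := sub_ne_zero.2 hxy.ne' 
    have hvm : (y - x) * m = g y - g x := by
      rw [hm]; field_simp
    have hhy : hfun y = 0 := by
      simp only [hhfun]
      linarith [hvm]
    suffices hsuff : hfun z ≤ 0 by
      simp only [hhfun, hm] at hsuff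
      have he : (z - x) * ((g y - g x) / (y - x)) = (z - x) / (y - x) * (g y - g x) := by
        ring
      linarith [hsuff, he.le, he.ge]
    by_contra hpos
    push_neg at hpos
    obtain ⟨tm, htm, htmax'⟩ := (isCompact_Icc (a := x) (b := y)).exists_isMaxOn
      ⟨x, Set.left_mem_Icc.2 hxy.le⟩ hcont'
    have htmax : ∀ s ∈ Set.Icc x y, hfun s ≤ hfun tm := fun s hs => htmax' hs
    set M := hfun tm with hM
    have hMpos : 0 < M := lt_of_lt_of_le hpos (htmax z ⟨hxz, hzy⟩)
    set T : Set ℝ := Set.Icc x y ∩ hfun ⁻¹' {M} with hT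
    have hTcomp : IsCompact T := by
      apply isCompact_Icc.inter_right
      have : Continuous hfun := by fun_prop
      exact IsClosed.preimage this isClosed_singleton
    have hTne : T.Nonempty := ⟨tm, htm, rfl⟩
    have ht₀T : sSup T ∈ T := hTcomp.sSup_mem hTne
    set t₀ := sSup T with ht₀
    obtain ⟨⟨ht₀x, ht₀y⟩, ht₀M⟩ := ht₀T
    have ht₀M : hfun t₀ = M := ht₀M
    have hne_x : t₀ ≠ x := fun he => by rw [he, hhx] at ht₀M; linarith
    have hne_y : t₀ ≠ y := fun he => by rw [he, hhy] at ht₀M; linarith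
    have hx_lt : x < t₀ := lt_of_le_of_ne ht₀x (Ne.symm hne_x)
    have hlt_y : t₀ < y := lt_of_le_of_ne ht₀y hne_y
    obtain ⟨ε₀, hε₀, a, b, hab, hg⟩ := h t₀
    set ε := min ε₀ (min (y - t₀) (t₀ - x)) with hε
    have hεpos : 0 < ε := by
      apply lt_min hε₀
      apply lt_min <;> linarith
    have hεle : ε ≤ ε₀ := min_le_left _ _
    have hεy : t₀ + ε ≤ y := by
      have := (min_le_right ε₀ (min (y - t₀) (t₀ - x))).trans (min_le_left _ _)
      linarith
    have hεx : x ≤ t₀ - ε := by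
      have := (min_le_right ε₀ (min (y - t₀) (t₀ - x))).trans (min_le_right _ _)
      linarith
    obtain ⟨hgp, hgm⟩ := hg ε hεpos hεle
    have hhp : hfun (t₀ + ε) = M + ε * (a - m) := by
      simp only [hhfun]; rw [hgp]
      have : g t₀ = hfun t₀ + (g x + (t₀ - x) * m) := by simp [hhfun]
      rw [this, ht₀M]; ring
    have hhm : hfun (t₀ - ε) = M + ε * (b + m) := by
      simp only [hhfun]; rw [hgm]
      have : g t₀ = hfun t₀ + (g x + (t₀ - x) * m) := by simp [hhfun]
      rw [this, ht₀M]; ring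
    have hple : hfun (t₀ + ε) ≤ M := htmax _ ⟨by linarith, hεy⟩
    have hmle : hfun (t₀ - ε) ≤ M := htmax _ ⟨hεx, by linarith⟩
    have ha' : a - m ≤ 0 := by nlinarith
    have hb' : b + m ≤ 0 := by nlinarith
    have ha0 : a - m = 0 := by linarith
    have hmem : t₀ + ε ∈ T := by
      refine ⟨⟨by linarith, hεy⟩, ?_⟩
      simp only [Set.mem_preimage, Set.mem_singleton_iff]
      rw [hhp, ha0]; ring
    have : t₀ + ε ≤ t₀ := le_csSup hTcomp.bddAbove hmem
    linarith
  -- conclude convexity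
  refine ⟨convex_univ, ?_⟩
  intro x _ y _ p q hp hq hpq
  simp only [smul_eq_mul]
  have hp' : p = 1 - q := by linarith
  subst hp'
  have hq1 : q ≤ 1 := by linarith
  rcases lt_trichotomy x y with hxy | heq | hyx
  · have hz1 : x ≤ (1-q) * x + q * y := by nlinarith [mul_nonneg hq (sub_nonneg.2 hxy.le)]
    have hz2 : (1-q) * x + q * y ≤ y := by
      nlinarith [mul_nonneg (by linarith : (0:ℝ) ≤ 1 - q) (sub_nonneg.2 hxy.le)]
    have hkey := key x y hxy ((1-q) * x + q * y) hz1 hz2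
    have hfrac : ((1-q) * x + q * y - x) / (y - x) = q := by
      have hzx : (1-q) * x + q * y - x = q * (y - x) := by ring
      rw [hzx, mul_div_assoc, div_self (sub_ne_zero.2 hxy.ne'), mul_one]
    rw [hfrac] at hkey
    linarith [hkey]
  · subst heq
    have he : (1-q) * x + q * x = x := by ring
    rw [he]
    linarith
  · have hz1 : y ≤ (1-q) * x + q * y := by
      nlinarith [mul_nonneg (by linarith : (0:ℝ) ≤ 1 - q) (sub_nonneg.2 hyx.le)]
    have hz2 : (1-q) * x + q * y ≤ x := by nlinarith [mul_nonneg hq (sub_nonneg.2 hyx.le)]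
    have hkey := key y x hyx ((1-q) * x + q * y) hz1 hz2
    have hfrac : ((1-q) * x + q * y - y) / (x - y) = 1 - q := by
      have hzx : (1-q) * x + q * y - y = (1-q) * (x - y) := by ring
      rw [hzx, mul_div_assoc, div_self (sub_ne_zero.2 hyx.ne'), mul_one]
    rw [hfrac] at hkey
    linarith [hkey]

-- ## backward direction assembly

lemma backward (B : List ((Fin n → ℝ) × ℝ))
    (H : ∀ (p : Fin n → ℝ) (i i' : Fin (n+1)), i ≠ i' → 0 ≤ marginalWeight B p i i') :
    ConvexOn ℝ Set.univ (indirectUtility B) := by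
  have hcross : ∀ (q : Fin n → ℝ) (L U : Finset (Fin (n+1))),
      L.Nonempty → U.Nonempty → Disjoint L U → 0 ≤ crossSum B q L U :=
    fun q L U hL hU hd => crossSum_nonneg B H (L.card + U.card) q L U le_rfl hL hU hd
  have hosc : ∀ (q : Fin n → ℝ) (u : Fin (n+1) → ℝ), 0 ≤ oscSum B q u :=
    fun q u => oscSum_nonneg_aux B hcross (Finset.univ.image u).card u q le_rfl
  refine ⟨convex_univ, ?_⟩
  intro x _ y _ a b ha hb hab
  set v : Fin n → ℝ := y - x with hv
  have hline : ∀ t : ℝ, ∃ ε₀ > 0, ∃ A Bc : ℝ, 0 ≤ A + Bc ∧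
      ∀ ε : ℝ, 0 < ε → ε ≤ ε₀ →
        indirectUtility B (x + (t + ε) • v) = indirectUtility B (x + t • v) + ε * A ∧
        indirectUtility B (x + (t - ε) • v) = indirectUtility B (x + t • v) + ε * Bc := by
    intro t
    obtain ⟨ε₁, hε₁, h₁⟩ := pert_f B (x + t • v) v
    obtain ⟨ε₂, hε₂, h₂⟩ := pert_f B (x + t • v) (-v)
    refine ⟨min ε₁ ε₂, lt_min hε₁ hε₂, -slopeSum B (x + t • v) (extVec v),
      -slopeSum B (x + t • v) (extVec (-v)), ?_, ?_⟩
    · have h3 := slopeSum_add_neg B (x + t • v) v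
      have h4 := hosc (x + t • v) (extVec v)
      linarith
    · intro ε hε hεle
      constructor
      · have he := h₁ ε hε (hεle.trans (min_le_left _ _))
        have harg : x + (t + ε) • v = (x + t • v) + ε • v := by
          funext j
          simp only [Pi.add_apply, Pi.smul_apply, smul_eq_mul]
          ring
        rw [harg, he]; ring
      · have he := h₂ ε hε (hεle.trans (min_le_right _ _))
        have harg : x + (t - ε) • v = (x + t • v) + ε • (-v) := by
          funext j
          simp only [Pi.add_apply, Pi.smul_apply, Pi.neg_apply, smul_eq_mul]
          ring
        rw [harg, he]; ring
  have hg : ConvexOn ℝ Set.univ (fun t : ℝ => indirectUtility B (x + t • v)) :=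
    oneDim _ hline
  have h01 := hg.2 (Set.mem_univ (0:ℝ)) (Set.mem_univ (1:ℝ)) ha hb hab
  simp only [smul_eq_mul, mul_zero, mul_one] at h01
  have e0 : x + (0:ℝ) • v = x := by
    funext j; simp
  have e1 : x + (1:ℝ) • v = y := by
    funext j
    simp only [Pi.add_apply, Pi.smul_apply, one_smul, hv, Pi.sub_apply]
    ring
  rw [e0, e1, zero_add] at h01
  have e2 : x + b • v = a • x + b • y := by
    funext j
    simp only [Pi.add_apply, Pi.smul_apply, smul_eq_mul, hv, Pi.sub_apply]
    have hab' : a = 1 - b := by linarith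
    rw [hab']; ring
  simp only [smul_eq_mul]
  rw [← e2]
  exact h01


/-- For a finite list of (±1-weighted) bids on `n ≥ 1` goods, the indirect
utility function `f_B` is convex on `ℝ^n` iff at every price `p` and every pair of distinct
goods `i ≠ i'` in `{0,…,n}`, the weights of the bids marginal on both `i` and `i'` at `p`
sum to a non-negative number. -/
theorem stmt0 (n : ℕ) (hn : 1 ≤ n) (B : List ((Fin n → ℝ) × ℝ))
    (hw : ∀ bw ∈ B, bw.2 = 1 ∨ bw.2 = -1) :
    ConvexOn ℝ Set.univ (indirectUtility B) ↔
      ∀ (p : Fin n → ℝ) (i i' : Fin (n + 1)), i ≠ i' → 0 ≤ marginalWeight B p i i' := by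
  constructor
  · intro hconv p i i' hne
    exact forward_marginal B (fun q v => convex_oscSum B hconv q v) p i i' hne
  · intro H
    exact backward B H

end
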